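/- Let R be a ring (not necessarily commutative) and let u, v, ζ be units of R with ζ central, satisfying v·u = ζ²·(u·v). For integers a, b, c, d set u' = ζ^(ab)·u^a·v^b and v' = ζ^(cd)·u^c·v^d. Then for all integers m, n one has (u')^m·(v')^n = ζ^(a·b·m² + c·d·n² + 2·b·c·m·n)·u^(am+cn)·v^(bm+dn). -/

import Mathlib

/-- In a (not necessarily commutative) ring `R`, if units `u, v, ζ` satisfy
`v * u = ζ^2 * (u * v)` with `ζ` central, and
`u' = ζ^(ab) * u^a * v^b`, `v' = ζ^(cd) * u^c * v^d`, then
`u'^m * v'^n = ζ^(abm² + cdn² + 2bcmn) * (u^(am+cn) * v^(bm+dn))`. -/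
theorem stmt2 (R : Type*) [Ring R] (u v ζ : Rˣ)
    (hζ : ∀ r : R, (ζ : R) * r = r * (ζ : R))
    (h : v * u = ζ ^ 2 * (u * v))
    (a b c d : ℤ)
    (u' v' : Rˣ)
    (hu' : u' = ζ ^ (a * b) * u ^ a * v ^ b)
    (hv' : v' = ζ ^ (c * d) * u ^ c * v ^ d) :
    ∀ m n : ℤ, u' ^ m * v' ^ n
      = ζ ^ (a * b * m ^ 2 + c * d * n ^ 2 + 2 * b * c * m * n)
          * (u ^ (a * m + c * n) * v ^ (b * m + d * n)) := by
  have hcz : ∀ w : Rˣ, Commute ζ w := fun w => Units.ext (hζ w)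
  have cz : ∀ (k : ℤ) (w : Rˣ), w * ζ ^ k = ζ ^ k * w :=
    fun k w => ((hcz w).zpow_left k).symm
  have czm : ∀ (k : ℤ) (w x : Rˣ), w * (ζ ^ k * x) = ζ ^ k * (w * x) := by
    intro k w x; rw [← mul_assoc, cz, mul_assoc]
  have zz : ∀ (k l : ℤ) (x : Rˣ), ζ ^ k * (ζ ^ l * x) = ζ ^ (k + l) * x := by
    intro k l x; rw [← mul_assoc, ← zpow_add]
  have eqf : ∀ k k' i i' j j' : ℤ, k = k' → i = i' → j = j' →
      ζ ^ k * (u ^ i * v ^ j) = ζ ^ k' * (u ^ i' * v ^ j') := by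
    rintro k _ i _ j _ rfl rfl rfl; rfl
  have key1 : ∀ i : ℤ, v * u ^ i = ζ ^ (2 * i) * (u ^ i * v) := by
    intro i
    have hs : SemiconjBy v u ((ζ ^ (2 : ℤ)) * u) := by
      show v * u = ζ ^ (2 : ℤ) * u * v
      rw [h, mul_assoc]; norm_cast
    have H := (hs.zpow_right i :)
    rw [SemiconjBy] at H
    rw [((hcz u).zpow_left 2).mul_zpow, ← zpow_mul, mul_assoc] at H
    exact H
  have key1' : ∀ i : ℤ, v⁻¹ * u ^ i = ζ ^ (-(2 * i)) * (u ^ i * v⁻¹) := by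
    intro i
    have e : v * (ζ ^ (-(2 * i)) * (u ^ i * v⁻¹)) = u ^ i := by
      rw [czm, ← mul_assoc v, key1, mul_assoc, zz]
      simp
    calc v⁻¹ * u ^ i = v⁻¹ * (v * (ζ ^ (-(2 * i)) * (u ^ i * v⁻¹))) := by rw [e]
      _ = ζ ^ (-(2 * i)) * (u ^ i * v⁻¹) := by rw [← mul_assoc]; simp
  have key2 : ∀ (i j : ℤ), v ^ j * u ^ i = ζ ^ (2 * i * j) * (u ^ i * v ^ j) := by
    intro i j
    induction j using Int.induction_on with
    | zero => simp
    | succ j ih =>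
      rw [zpow_add_one, mul_assoc, key1, czm, ← mul_assoc (v ^ (j : ℤ)), ih,
        mul_assoc (ζ ^ (2 * i * (j : ℤ))), zz, mul_assoc (u ^ i), ← zpow_add_one]
      exact eqf _ _ _ _ _ _ (by ring) rfl rfl
    | pred j ih =>
      rw [zpow_sub_one, mul_assoc, key1', czm, ← mul_assoc (v ^ (-(j : ℤ))), ih,
        mul_assoc (ζ ^ (2 * i * (-(j : ℤ)))), zz, mul_assoc (u ^ i), ← zpow_sub_one]
      exact eqf _ _ _ _ _ _ (by ring) rfl rfl
  have mulf : ∀ k1 i1 j1 k2 i2 j2 : ℤ,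
      (ζ ^ k1 * (u ^ i1 * v ^ j1)) * (ζ ^ k2 * (u ^ i2 * v ^ j2))
        = ζ ^ (k1 + k2 + 2 * i2 * j1) * (u ^ (i1 + i2) * v ^ (j1 + j2)) := by
    intro k1 i1 j1 k2 i2 j2
    calc (ζ ^ k1 * (u ^ i1 * v ^ j1)) * (ζ ^ k2 * (u ^ i2 * v ^ j2))
        = ζ ^ k1 * (ζ ^ k2 * ((u ^ i1 * v ^ j1) * (u ^ i2 * v ^ j2))) := by
          rw [mul_assoc, czm]
      _ = ζ ^ (k1 + k2) * (u ^ i1 * ((v ^ j1 * u ^ i2) * v ^ j2)) := by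
          rw [zz]; congr 1; simp only [mul_assoc]
      _ = ζ ^ (k1 + k2) * (u ^ i1 * ((ζ ^ (2 * i2 * j1) * (u ^ i2 * v ^ j1)) * v ^ j2)) := by
          rw [key2]
      _ = ζ ^ (k1 + k2 + 2 * i2 * j1) * (u ^ (i1 + i2) * v ^ (j1 + j2)) := by
          rw [mul_assoc (ζ ^ (2 * i2 * j1)), czm, zz, mul_assoc (u ^ i2), ← zpow_add v,
            ← mul_assoc (u ^ i1), ← zpow_add u]
  have invf : ∀ k i j : ℤ,
      (ζ ^ k * (u ^ i * v ^ j))⁻¹ = ζ ^ (2 * i * j - k) * (u ^ (-i) * v ^ (-j)) := by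
    intro k i j
    refine inv_eq_of_mul_eq_one_right ?_
    rw [mulf]
    rw [show k + (2 * i * j - k) + 2 * (-i) * j = 0 by ring, show i + -i = 0 by ring,
      show j + -j = 0 by ring]
    simp
  have Q : ∀ p q m : ℤ, (ζ ^ (p * q) * (u ^ p * v ^ q)) ^ m
      = ζ ^ (p * q * m ^ 2) * (u ^ (p * m) * v ^ (q * m)) := by
    intro p q m
    induction m using Int.induction_on with
    | zero => simp
    | succ m ih =>
      rw [zpow_add_one, ih, mulf]
      exact eqf _ _ _ _ _ _ (by ring) (by ring) (by ring)
    | pred m ih =>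
      rw [zpow_sub_one, ih, invf, mulf]
      exact eqf _ _ _ _ _ _ (by ring) (by ring) (by ring)
  intro m n
  rw [hu', hv', mul_assoc (ζ ^ (a * b)), mul_assoc (ζ ^ (c * d)), Q, Q, mulf]
  exact eqf _ _ _ _ _ _ (by ring) (by ring) (by ring)
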